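/- With P, Q, A_z, A_{z̃} as in the Tzitzéica ansatz (P_{13}=1, Q_{31}=e^u, A_z lower-triangular with diagonal (u_z, −u_z, 0) and subdiagonal entries 1, A_{z̃} upper-triangular with (A_{z̃})_{12}=e^{−2u}, (A_{z̃})_{23}=e^u), the gauge-invariant conditions hold: Tr(PQ) = e^u ≠ 0, Tr((D_zP)²) = 0, Tr((D_{z̃}Q)²) = 0, Tr((D_zP)²(D_{z̃}Q)²) ≠ 0, and Tr((PQ)⁴ + (PQ)²(D_zP)(D_{z̃}Q) − PQ(D_zP)QP(D_{z̃}Q)) = 0, provided u satisfies u_{zz̃} = e^u − e^{−2u}. -/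

import Mathlib

noncomputable def pdz (f : ℂ × ℂ → ℂ) (p : ℂ × ℂ) : ℂ :=
  deriv (fun t => f (t, p.2)) p.1

noncomputable def pdzt (f : ℂ × ℂ → ℂ) (p : ℂ × ℂ) : ℂ :=
  deriv (fun t => f (p.1, t)) p.2

noncomputable def pdzM (M : ℂ × ℂ → Matrix (Fin 3) (Fin 3) ℂ) (p : ℂ × ℂ) :
    Matrix (Fin 3) (Fin 3) ℂ :=
  Matrix.of fun i j => pdz (fun q => M q i j) p

noncomputable def pdztM (M : ℂ × ℂ → Matrix (Fin 3) (Fin 3) ℂ) (p : ℂ × ℂ) :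
    Matrix (Fin 3) (Fin 3) ℂ :=
  Matrix.of fun i j => pdzt (fun q => M q i j) p

/-- For the Tzitzéica ansatz, provided `u_{zz̃} = e^u − e^{−2u}`,
the gauge-invariant conditions hold: `Tr(PQ) = e^u ≠ 0`, `Tr((D_zP)²) = 0`,
`Tr((D_{z̃}Q)²) = 0`, `Tr((D_zP)²(D_{z̃}Q)²) ≠ 0`, and
`Tr((PQ)⁴ + (PQ)²(D_zP)(D_{z̃}Q) − PQ(D_zP)QP(D_{z̃}Q)) = 0`. -/
theorem stmt10 (u : ℂ × ℂ → ℂ) (hu : Differentiable ℂ u)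
    (P Q Az Azt DzP DztQ : ℂ × ℂ → Matrix (Fin 3) (Fin 3) ℂ)
    (hP : ∀ p, P p = !![0, 0, 1; 0, 0, 0; 0, 0, 0])
    (hQ : ∀ p, Q p = !![0, 0, 0; 0, 0, 0; Complex.exp (u p), 0, 0])
    (hAz : ∀ p, Az p = !![pdz u p, 0, 0; 1, -(pdz u p), 0; 0, 1, 0])
    (hAzt : ∀ p, Azt p =
      !![0, Complex.exp (-2 * u p), 0; 0, 0, Complex.exp (u p); 0, 0, 0])
    (hDzP : ∀ p, DzP p = pdzM P p + (Az p * P p - P p * Az p))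
    (hDztQ : ∀ p, DztQ p = pdztM Q p + (Azt p * Q p - Q p * Azt p))
    (htz : ∀ p, pdz (pdzt u) p = Complex.exp (u p) - Complex.exp (-2 * u p)) :
    ∀ p, (P p * Q p).trace = Complex.exp (u p) ∧ Complex.exp (u p) ≠ 0 ∧
      ((DzP p) ^ 2).trace = 0 ∧ ((DztQ p) ^ 2).trace = 0 ∧
      ((DzP p) ^ 2 * (DztQ p) ^ 2).trace ≠ 0 ∧
      ((P p * Q p) ^ 4 + (P p * Q p) ^ 2 * DzP p * DztQ p
        - P p * Q p * DzP p * (Q p * P p) * DztQ p).trace = 0 := by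
  intro p
  have hconstP : pdzM P p = 0 := by
    ext i j
    simp only [pdzM, pdz, Matrix.of_apply, hP]
    exact deriv_const _ _
  have hd : DifferentiableAt ℂ (fun t => u (p.1, t)) p.2 :=
    (hu _).comp p.2 (DifferentiableAt.prodMk (differentiableAt_const _) differentiableAt_id)
  have hQd : pdztM Q p =
      !![0, 0, 0; 0, 0, 0; Complex.exp (u p) * pdzt u p, 0, 0] := by
    ext i j
    simp only [pdztM, pdzt, Matrix.of_apply, hQ]
    fin_cases i <;> fin_cases j <;>
      simp [deriv_cexp hd, pdzt, Matrix.vecHead, Matrix.vecTail, Function.comp]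
  have hDzP' : DzP p = !![0, -1, pdz u p; 0, 0, 1; 0, 0, 0] := by
    rw [hDzP, hconstP, hAz, hP]
    ext i j
    fin_cases i <;> fin_cases j <;>
      simp [Matrix.mul_apply, Fin.sum_univ_succ, Matrix.vecHead, Matrix.vecTail]
  have hDztQ' : DztQ p = !![0, 0, 0;
      Complex.exp (u p) * Complex.exp (u p), 0, 0;
      Complex.exp (u p) * pdzt u p,
      -(Complex.exp (u p) * Complex.exp (-2 * u p)), 0] := by
    rw [hDztQ, hQd, hAzt, hQ]
    ext i j
    fin_cases i <;> fin_cases j <;>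
      simp [Matrix.mul_apply, Fin.sum_univ_succ, Matrix.vecHead, Matrix.vecTail] <;> ring
  refine ⟨?_, Complex.exp_ne_zero _, ?_, ?_, ?_, ?_⟩
  · simp [hP, hQ, Matrix.trace_fin_three, Matrix.mul_apply, Fin.sum_univ_succ, Matrix.vecHead, Matrix.vecTail]
  · simp [hDzP', pow_two, Matrix.trace_fin_three, Matrix.mul_apply,
      Fin.sum_univ_succ, Matrix.vecHead, Matrix.vecTail]
  · simp [hDztQ', pow_two, Matrix.trace_fin_three, Matrix.mul_apply,
      Fin.sum_univ_succ, Matrix.vecHead, Matrix.vecTail]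
  · have : ((DzP p) ^ 2 * (DztQ p) ^ 2).trace =
        Complex.exp (u p) * Complex.exp (u p) * Complex.exp (u p) *
          Complex.exp (-2 * u p) := by
      simp [hDzP', hDztQ', pow_two, Matrix.trace_fin_three, Matrix.mul_apply,
        Fin.sum_univ_succ, Matrix.vecHead, Matrix.vecTail]
      ring
    rw [this]
    simp [Complex.exp_ne_zero]
  · simp [hP, hQ, hDzP', hDztQ', Matrix.trace_fin_three, Matrix.mul_apply,
      Fin.sum_univ_succ, pow_succ, Matrix.vecHead, Matrix.vecTail]
    ring
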